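/- Let m, k be integers with 1 ≤ k < m, and let ḡ_{(m,k)} be the associated function on 𝔽_3^m. For every v ∈ 𝔽_3^m with wt(v) = i ≥ 1, the real part of the Walsh transform of ḡ_{(m,k)} at v equals (3/2)·Ψ_k(i, m). -/

import Mathlib

open Finset

/-- `ζ = exp(2πi/3)`, a primitive cube root of unity. -/
noncomputable def zeta3 : ℂ := Complex.exp (2 * Real.pi * Complex.I / 3)

/-- The Walsh transform of `h : 𝔽_3^m → 𝔽_3` at `w ∈ 𝔽_3^m`:
`ĥ(w) = Σ_{x ∈ 𝔽_3^m} ζ^{h(x) - w·x}`. -/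
noncomputable def walsh {m : ℕ} (h : (Fin m → ZMod 3) → ZMod 3)
    (w : Fin m → ZMod 3) : ℂ :=
  ∑ x : Fin m → ZMod 3, zeta3 ^ (h x - ∑ i, w i * x i).val

/-- The function `ḡ_{(m,k)} : 𝔽_3^m → 𝔽_3`: `1` if `wt(x) > k`, `0` if `wt(x) ≤ k`. -/
def gbar {m : ℕ} (k : ℕ) (x : Fin m → ZMod 3) : ZMod 3 :=
  if k < hammingNorm x then 1 else 0

/-- The ternary Krawtchouk polynomial
`K_t(i,m) = Σ_{j=0}^{t} (-1)^j·2^{t-j}·C(i,j)·C(m-i,t-j)`. -/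
def kraw (t i m : ℕ) : ℤ :=
  ∑ j ∈ Finset.range (t + 1),
    (-1 : ℤ) ^ j * 2 ^ (t - j) * (i.choose j : ℤ) * ((m - i).choose (t - j) : ℤ)

/-- The Lloyd polynomial `Ψ_k(i,m) = Σ_{t=0}^{k} K_t(i,m)`. -/
def lloyd (k i m : ℕ) : ℤ := ∑ t ∈ Finset.range (k + 1), kraw t i m

/-! ### Auxiliary lemmas -/

lemma zeta3_prim : IsPrimitiveRoot zeta3 3 := by
  have h := Complex.isPrimitiveRoot_exp 3 (by norm_num)
  have : ((3 : ℕ) : ℂ) = 3 := by norm_num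
  rw [this] at h
  exact h

lemma zeta3_pow_three : zeta3 ^ 3 = 1 := zeta3_prim.pow_eq_one

lemma zeta3_pow_mod (n : ℕ) : zeta3 ^ (n % 3) = zeta3 ^ n := by
  conv_rhs => rw [← Nat.div_add_mod n 3]
  rw [pow_add, pow_mul, zeta3_pow_three, one_pow, one_mul]

/-- The additive character `a ↦ ζ^a`. -/
noncomputable def chi (a : ZMod 3) : ℂ := zeta3 ^ a.val

lemma chi_zero : chi 0 = 1 := by simp [chi]

lemma chi_add (a b : ZMod 3) : chi (a + b) = chi a * chi b := by
  unfold chi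
  rw [← pow_add, ← zeta3_pow_mod (a.val + b.val), ← ZMod.val_add]

lemma chi_sum {α : Type*} (s : Finset α) (g : α → ZMod 3) :
    chi (∑ a ∈ s, g a) = ∏ a ∈ s, chi (g a) := by
  induction s using Finset.cons_induction with
  | empty => simp [chi_zero]
  | cons a s ha ih => rw [Finset.sum_cons, Finset.prod_cons, chi_add, ih]

lemma chi_one : chi 1 = zeta3 := by
  rw [chi, show ((1 : ZMod 3)).val = 1 from rfl, pow_one]

lemma zmod3_univ : (univ : Finset (ZMod 3)) = {0, 1, 2} := by decide

lemma sum_zmod3 {M : Type*} [AddCommMonoid M] (f : ZMod 3 → M) :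
    ∑ a : ZMod 3, f a = f 0 + f 1 + f 2 := by
  rw [zmod3_univ]
  rw [show ({0, 1, 2} : Finset (ZMod 3)) = insert 0 (insert 1 {2}) from rfl]
  rw [Finset.sum_insert (by decide), Finset.sum_insert (by decide),
    Finset.sum_singleton, add_assoc]

lemma chi_total : chi 0 + chi 1 + chi 2 = 0 := by
  have h := zeta3_prim.geom_sum_eq_zero (by norm_num)
  have : chi 0 + chi 1 + chi 2 = ∑ j ∈ range 3, zeta3 ^ j := by
    rw [Finset.sum_range_succ, Finset.sum_range_succ, Finset.sum_range_one]
    simp [chi, show ((1 : ZMod 3)).val = 1 from rfl, show ((2 : ZMod 3)).val = 2 from rfl]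
  rw [this, h]

lemma chi_pair (b : ZMod 3) (hb : b ≠ 0) : chi b + chi (2 * b) = -1 := by
  have h := chi_total
  rw [chi_zero] at h
  have hball : ∀ c : ZMod 3, c ≠ 0 → c = 1 ∨ c = 2 := by decide
  have hb' : b = 1 ∨ b = 2 := hball b hb
  rcases hb' with hb' | hb' <;> subst hb'
  · rw [show (2 : ZMod 3) * 1 = 2 by decide]; linear_combination h
  · rw [show (2 : ZMod 3) * 2 = 1 by decide]; linear_combination h

open Polynomial in
/-- The generating polynomial `Σ_x χ(-v·x) X^{wt x}`. -/
noncomputable def Pgen {m : ℕ} (v : Fin m → ZMod 3) : Polynomial ℂ :=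
  ∑ x : Fin m → ZMod 3, C (chi (-∑ s, v s * x s)) * X ^ hammingNorm x

open Polynomial in
lemma Pgen_eq_prod {m : ℕ} (v : Fin m → ZMod 3) :
    Pgen v = ∏ s : Fin m,
      (1 + C (if v s = 0 then 2 else -1) * X) := by
  have key : ∀ s : Fin m,
      (1 + C (if v s = 0 then (2 : ℂ) else -1) * X)
        = ∑ a : ZMod 3, C (chi (-(v s * a))) * X ^ (if a = 0 then 0 else 1) := by
    intro s
    rw [sum_zmod3]
    rw [if_neg (show (1 : ZMod 3) ≠ 0 by decide), if_neg (show (2 : ZMod 3) ≠ 0 by decide),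
      if_pos rfl]
    simp only [mul_zero, neg_zero, chi_zero, map_one, one_mul, pow_zero, pow_one]
    by_cases hs : v s = 0
    · rw [if_pos hs, hs]
      simp only [zero_mul, neg_zero, chi_zero, map_one, one_mul]
      rw [show (C (2 : ℂ)) = C 1 + C 1 by rw [← map_add]; norm_num, map_one]
      ring
    · have hp := chi_pair (-v s) (neg_ne_zero.mpr hs)
      have h1 : -(v s * 1) = -v s := by ring
      have h2 : -(v s * 2) = 2 * (-v s) := by ring
      rw [if_neg hs, h1, h2, add_assoc, ← add_mul, ← map_add, hp]
  simp_rw [key]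
  rw [Finset.prod_univ_sum]
  rw [Fintype.piFinset_univ]
  unfold Pgen
  refine Finset.sum_congr rfl fun x _ => ?_
  rw [Finset.prod_mul_distrib, ← map_prod, ← chi_sum,
    Finset.prod_pow_eq_pow_sum]
  congr 2
  · rw [← Finset.sum_neg_distrib]
  · rw [hammingNorm, Finset.card_filter]
    exact (Finset.sum_congr rfl fun s _ => by
      by_cases h : x s = 0 <;> simp [h]).symm

open Polynomial in
lemma Pgen_eq_pow {m : ℕ} (v : Fin m → ZMod 3) {i : ℕ} (hvi : hammingNorm v = i) :
    Pgen v = (1 + C (-1 : ℂ) * X) ^ i * (1 + C (2 : ℂ) * X) ^ (m - i) := by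
  rw [Pgen_eq_prod]
  rw [← Finset.prod_filter_mul_prod_filter_not univ (fun s => v s = 0)]
  have hcard0 : (univ.filter fun s => ¬ v s = 0).card = i := by
    rw [← hvi, hammingNorm]
  have hcardz : (univ.filter fun s => v s = 0).card = m - i := by
    have := Finset.card_filter_add_card_filter_not
      (s := (univ : Finset (Fin m))) (p := fun s => v s = 0)
    simp only [Finset.card_univ, Fintype.card_fin] at this
    omega
  have e1 : ∏ s ∈ univ.filter (fun s => v s = 0),
      (1 + C (if v s = 0 then (2 : ℂ) else -1) * X) = (1 + C (2 : ℂ) * X) ^ (m - i) := by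
    rw [Finset.prod_congr rfl (fun s hs => by
        rw [if_pos (Finset.mem_filter.mp hs).2]), Finset.prod_const, hcardz]
  have e2 : ∏ s ∈ univ.filter (fun s => ¬ v s = 0),
      (1 + C (if v s = 0 then (2 : ℂ) else -1) * X) = (1 + C (-1 : ℂ) * X) ^ i := by
    rw [Finset.prod_congr rfl (fun s hs => by
        rw [if_neg (Finset.mem_filter.mp hs).2]), Finset.prod_const, hcard0]
  rw [e1, e2, mul_comm]

open Polynomial in
lemma coeff_one_add_CX (c : ℂ) (n t : ℕ) :
    ((1 + C c * X) ^ n).coeff t = c ^ t * (n.choose t : ℂ) := by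
  rw [add_comm, add_pow]
  rw [finset_sum_coeff]
  have hterm : ∀ j ∈ range (n + 1),
      ((C c * X) ^ j * 1 ^ (n - j) * (n.choose j : Polynomial ℂ)).coeff t
        = if j = t then c ^ t * (n.choose t : ℂ) else 0 := by
    intro j hj
    rw [one_pow, mul_one, mul_pow, ← C_pow, ← C_eq_natCast, coeff_mul_C, coeff_C_mul,
      coeff_X_pow]
    by_cases h : j = t
    · subst h; simp [mul_comm]
    · simp [h, Ne.symm h]
  rw [Finset.sum_congr rfl hterm, Finset.sum_ite_eq' (range (n + 1)) t
    (fun _ => c ^ t * (n.choose t : ℂ))]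
  by_cases ht : t ∈ range (n + 1)
  · rw [if_pos ht]
  · rw [if_neg ht]
    rw [Finset.mem_range, not_lt] at ht
    rw [Nat.choose_eq_zero_of_lt (by omega)]
    simp

open Polynomial in
lemma Pgen_coeff {m : ℕ} (v : Fin m → ZMod 3) {i : ℕ} (hvi : hammingNorm v = i) (t : ℕ) :
    (Pgen v).coeff t = (kraw t i m : ℂ) := by
  rw [Pgen_eq_pow v hvi, coeff_mul]
  rw [Finset.Nat.sum_antidiagonal_eq_sum_range_succ_mk]
  unfold kraw
  push_cast
  refine Finset.sum_congr rfl fun j _ => ?_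
  rw [coeff_one_add_CX, coeff_one_add_CX]
  ring

open Polynomial in
lemma Pgen_coeff_sum {m : ℕ} (v : Fin m → ZMod 3) (t : ℕ) :
    (Pgen v).coeff t
      = ∑ x ∈ univ.filter (fun x : Fin m → ZMod 3 => hammingNorm x = t),
          chi (-∑ s, v s * x s) := by
  unfold Pgen
  rw [finset_sum_coeff]
  rw [Finset.sum_filter]
  refine Finset.sum_congr rfl fun x _ => ?_
  rw [coeff_C_mul, coeff_X_pow]
  by_cases h : hammingNorm x = t
  · rw [if_pos h.symm, if_pos h, mul_one]
  · rw [if_neg (Ne.symm h), if_neg h, mul_zero]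

open Polynomial in
lemma Pgen_eval_one {m : ℕ} (v : Fin m → ZMod 3) {i : ℕ} (hvi : hammingNorm v = i)
    (hi1 : 1 ≤ i) : (Pgen v).eval 1 = 0 := by
  rw [Pgen_eq_pow v hvi]
  simp only [eval_mul, eval_pow, eval_add, eval_one, eval_mul, eval_C, eval_X, mul_one]
  rw [show (1 : ℂ) + -1 = 0 by ring, zero_pow (by omega), zero_mul]

/-- For `1 ≤ k < m` and `v ∈ 𝔽_3^m` of Hamming weight `i ≥ 1`,
`Re(ḡ̂_{(m,k)}(v)) = (3/2)·Ψ_k(i,m)`. -/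
theorem stmt_14 (m k : ℕ) (hk1 : 1 ≤ k) (hkm : k < m)
    (v : Fin m → ZMod 3) (i : ℕ) (hvi : hammingNorm v = i) (hi1 : 1 ≤ i) :
    (walsh (gbar (m := m) k) v).re = 3 / 2 * (lloyd k i m : ℝ) := by
  -- T t := Σ_{wt x = t} χ(-v·x) = K_t(i,m)
  set T : ℕ → ℂ := fun t =>
    ∑ x ∈ univ.filter (fun x : Fin m → ZMod 3 => hammingNorm x = t),
      chi (-∑ s, v s * x s) with hT
  have hTK : ∀ t, T t = (kraw t i m : ℂ) := fun t => by
    have h := Pgen_coeff v hvi t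
    rw [Pgen_coeff_sum v t] at h
    exact h
  -- walsh as a sum of chi's
  have hwalsh : walsh (gbar (m := m) k) v
      = ∑ x : Fin m → ZMod 3, chi (gbar k x) * chi (-∑ s, v s * x s) := by
    unfold walsh
    refine Finset.sum_congr rfl fun x _ => ?_
    rw [← chi_add, sub_eq_add_neg]
    rfl
  -- partition by weight
  have hmaps : ∀ x : Fin m → ZMod 3, x ∈ (univ : Finset (Fin m → ZMod 3)) →
      hammingNorm x ∈ range (m + 1) := by
    intro x _
    rw [Finset.mem_range, Nat.lt_succ_iff]
    calc hammingNorm x ≤ Fintype.card (Fin m) := by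
          apply Finset.card_filter_le
      _ = m := Fintype.card_fin m
  have hsplit : walsh (gbar (m := m) k) v
      = ∑ t ∈ range (m + 1), (if k < t then zeta3 else 1) * T t := by
    rw [hwalsh, ← Finset.sum_fiberwise_of_maps_to hmaps]
    refine Finset.sum_congr rfl fun t _ => ?_
    rw [hT, Finset.mul_sum]
    refine Finset.sum_congr rfl fun x hx => ?_
    rw [Finset.mem_filter] at hx
    congr 1
    rw [gbar, hx.2]
    by_cases h : k < t
    · rw [if_pos h, if_pos h]; exact chi_one
    · rw [if_neg h, if_neg h, chi_zero]
  -- total sum of T over range (m+1) is zero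
  have htotal : ∑ t ∈ range (m + 1), T t = 0 := by
    have : ∑ t ∈ range (m + 1), T t = ∑ x : Fin m → ZMod 3, chi (-∑ s, v s * x s) := by
      rw [hT]
      exact Finset.sum_fiberwise_of_maps_to hmaps _
    rw [this]
    have he : (Pgen v).eval 1 = ∑ x : Fin m → ZMod 3, chi (-∑ s, v s * x s) := by
      unfold Pgen
      rw [Polynomial.eval_finset_sum]
      simp
    rw [← he, Pgen_eval_one v hvi hi1]
  -- split range (m+1) at k+1
  have hsum : walsh (gbar (m := m) k) v = (1 - zeta3) * (lloyd k i m : ℂ) := by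
    rw [hsplit]
    have hle : k + 1 ≤ m + 1 := by omega
    rw [Finset.range_eq_Ico, ← Finset.sum_Ico_consecutive _ (Nat.zero_le (k + 1)) hle]
    have h1 : ∑ t ∈ Finset.Ico 0 (k + 1), (if k < t then zeta3 else 1) * T t
        = (lloyd k i m : ℂ) := by
      rw [← Finset.range_eq_Ico]
      unfold lloyd
      push_cast
      refine Finset.sum_congr rfl fun t ht => ?_
      rw [Finset.mem_range, Nat.lt_succ_iff] at ht
      rw [if_neg (by omega), one_mul, hTK]
    have h2 : ∑ t ∈ Finset.Ico (k + 1) (m + 1), (if k < t then zeta3 else 1) * T t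
        = zeta3 * ∑ t ∈ Finset.Ico (k + 1) (m + 1), T t := by
      rw [Finset.mul_sum]
      refine Finset.sum_congr rfl fun t ht => ?_
      rw [Finset.mem_Ico] at ht
      rw [if_pos (by omega)]
    have h3 : ∑ t ∈ Finset.Ico (k + 1) (m + 1), T t = -(lloyd k i m : ℂ) := by
      have := htotal
      rw [Finset.range_eq_Ico, ← Finset.sum_Ico_consecutive _ (Nat.zero_le (k + 1)) hle] at this
      have h4 : ∑ t ∈ Finset.Ico 0 (k + 1), T t = (lloyd k i m : ℂ) := by
        rw [← Finset.range_eq_Ico]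
        unfold lloyd
        push_cast
        exact Finset.sum_congr rfl fun t _ => hTK t
      rw [h4] at this
      linear_combination this
    rw [h1, h2, h3]
    ring
  rw [hsum]
  -- real part computation
  have hre : zeta3.re = -(1 / 2) := by
    have : (2 * (Real.pi : ℂ) * Complex.I / 3) = ((2 * Real.pi / 3 : ℝ) : ℂ) * Complex.I := by
      push_cast
      ring
    rw [zeta3, this, Complex.exp_ofReal_mul_I_re]
    have : (2 * Real.pi / 3 : ℝ) = Real.pi - Real.pi / 3 := by ring
    rw [this, Real.cos_pi_sub, Real.cos_pi_div_three]
  have : ((1 - zeta3) * (lloyd k i m : ℂ)).re = (1 - zeta3.re) * (lloyd k i m : ℝ) := by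
    have hcast : ((lloyd k i m : ℂ)) = ((lloyd k i m : ℝ) : ℂ) := by push_cast; ring
    rw [hcast, Complex.mul_re]
    simp [Complex.sub_re, Complex.sub_im, Complex.ofReal_re, Complex.ofReal_im]
  rw [this, hre]
  ring
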